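/- arXiv:2305.13493 — 8 statements merged into one kernel-verified Lean document; each statement's English description precedes it below -/
import Mathlib

section
/- Let μ and ν be probability measures on a measurable space Ω with μ absolutely continuous with respect to ν and finite Kullback–Leibler divergence KL(μ‖ν). Let α > 0 and let D : Ω → ℝ be a measurable function that is strictly positive ν-almost everywhere, such that log∘D is μ-integrable and D is ν-integrable. Then α·∫ log(D) dμ − ∫ D dν ≤ α·KL(μ‖ν) + α·log(α) − α. -/
open MeasureTheory Real

/-- Let `μ, ν` be probability measures with `μ ≪ ν` and finite KL divergence
`KL(μ‖ν) = ∫ log (dμ/dν) dμ` (finiteness expressed as integrability of `log (dμ/dν)`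
with respect to `μ`). Let `α > 0` and `D` be measurable, strictly positive `ν`-a.e.,
with `log ∘ D` `μ`-integrable and `D` `ν`-integrable. Then
`α • ∫ log D dμ - ∫ D dν ≤ α • KL(μ‖ν) + α log α - α`. -/
theorem stmt3 {Ω : Type*} [MeasurableSpace Ω] (μ ν : Measure Ω)
    [IsProbabilityMeasure μ] [IsProbabilityMeasure ν]
    (hac : μ ≪ ν)
    (hKL : Integrable (fun ω => log ((μ.rnDeriv ν ω).toReal)) μ)
    (α : ℝ) (hα : 0 < α)
    (D : Ω → ℝ) (hDmeas : Measurable D)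
    (hDpos : ∀ᵐ ω ∂ν, 0 < D ω)
    (hlogD : Integrable (fun ω => log (D ω)) μ)
    (hD : Integrable D ν) :
    α * ∫ ω, log (D ω) ∂μ - ∫ ω, D ω ∂ν ≤
      α * ∫ ω, log ((μ.rnDeriv ν ω).toReal) ∂μ + α * log α - α := by
  set r : Ω → ℝ := fun ω => (μ.rnDeriv ν ω).toReal with hr
  set g : Ω → ℝ := fun ω => D ω / r ω with hg
  have hrmeas : Measurable r := (Measure.measurable_rnDeriv μ ν).ennreal_toReal
  have hrposμ : ∀ᵐ ω ∂μ, 0 < r ω := by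
    filter_upwards [Measure.rnDeriv_pos hac, hac.ae_le (Measure.rnDeriv_lt_top μ ν)]
      with ω h1 h2
    exact ENNReal.toReal_pos h1.ne' h2.ne
  have hDposμ : ∀ᵐ ω ∂μ, 0 < D ω := hac.ae_le hDpos
  -- the ν-integrand r • g is bounded by D
  have hbound : ∀ᵐ ω ∂ν, ‖r ω • g ω‖ ≤ D ω := by
    filter_upwards [hDpos] with ω hDω
    rcases eq_or_ne (r ω) 0 with h0 | h0
    · simp [hg, h0, hDω.le]
    · have h1 : r ω • g ω = D ω := by
        simp only [hg, smul_eq_mul]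
        field_simp
      rw [h1, Real.norm_eq_abs, abs_of_pos hDω]
  have hrgmeas : AEStronglyMeasurable (fun ω => r ω • g ω) ν :=
    ((hrmeas.smul (hDmeas.div hrmeas)) : Measurable fun ω => r ω • g ω).aestronglyMeasurable
  have hrgint : Integrable (fun ω => r ω • g ω) ν := Integrable.mono' hD hrgmeas hbound
  have hgint : Integrable g μ := (integrable_rnDeriv_smul_iff hac).mp hrgint
  have hgle : ∫ ω, g ω ∂μ ≤ ∫ ω, D ω ∂ν := by
    rw [← integral_rnDeriv_smul hac (f := g)]
    refine integral_mono_ae hrgint hD ?_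
    filter_upwards [hbound] with ω h
    exact (le_abs_self _).trans (by rwa [Real.norm_eq_abs] at h)
  -- pointwise inequality
  have hpt : ∀ᵐ ω ∂μ, α * log (D ω) ≤ α * log (r ω) + α * log α - α + g ω := by
    filter_upwards [hrposμ, hDposμ] with ω hrω hDω
    have ht : 0 < D ω / (α * r ω) := div_pos hDω (mul_pos hα hrω)
    have h1 := Real.log_le_sub_one_of_pos ht
    rw [Real.log_div hDω.ne' (mul_pos hα hrω).ne',
      Real.log_mul hα.ne' hrω.ne'] at h1
    have h2 : D ω / (α * r ω) = g ω / α := by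
      rw [hg, mul_comm, ← div_div]
    rw [h2] at h1
    have h3 := mul_le_mul_of_nonneg_left h1 hα.le
    have hgα : α * (g ω / α) = g ω := by field_simp
    nlinarith [h3, hgα]
  have hint : α * ∫ ω, log (D ω) ∂μ ≤
      α * ∫ ω, log (r ω) ∂μ + α * log α - α + ∫ ω, g ω ∂μ := by
    have hL : Integrable (fun ω => α * log (D ω)) μ := hlogD.const_mul α
    have hR : Integrable (fun ω => α * log (r ω) + α * log α - α + g ω) μ :=
      ((((hKL.const_mul α).add (integrable_const (α * log α))).sub (integrable_const α)).add hgint)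
    have := integral_mono_ae hL hR hpt
    rw [integral_const_mul] at this
    calc α * ∫ ω, log (D ω) ∂μ
        ≤ ∫ ω, (α * log (r ω) + α * log α - α + g ω) ∂μ := this
      _ = α * ∫ ω, log (r ω) ∂μ + α * log α - α + ∫ ω, g ω ∂μ := by
          have hR1 : Integrable (fun ω => α * log (r ω) + α * log α - α) μ :=
            ((hKL.const_mul α).add (integrable_const _)).sub (integrable_const _)
          have hR2 : Integrable (fun ω => α * log (r ω) + α * log α) μ :=
            (hKL.const_mul α).add (integrable_const _)
          rw [integral_add hR1 hgint, integral_sub hR2 (integrable_const α),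
            integral_add (hKL.const_mul α) (integrable_const (α * log α)),
            integral_const_mul, integral_const, integral_const]
          simp [hr]
  linarith
end

section
/- Let μ and ν be probability measures on a measurable space Ω with μ absolutely continuous with respect to ν, finite Kullback–Leibler divergence KL(μ‖ν), and Radon–Nikodym derivative dμ/dν strictly positive ν-almost everywhere. Let α > 0. Then the supremum, over all measurable functions D : Ω → ℝ that are strictly positive ν-almost everywhere with log∘D μ-integrable and D ν-integrable, of α·∫ log(D) dμ − ∫ D dν equals α·KL(μ‖ν) + α·log(α) − α, and this supremum is attained at D = α·(dμ/dν). -/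
open MeasureTheory Real

/-- Let `μ, ν` be probability measures with `μ ≪ ν`, finite KL divergence
`KL(μ‖ν) = ∫ log (dμ/dν) dμ` (finiteness expressed as integrability of `log (dμ/dν)`
with respect to `μ`), and `dμ/dν > 0` `ν`-a.e. Let `α > 0`. The supremum over all
measurable `D : Ω → ℝ` that are `ν`-a.e. strictly positive, with `log ∘ D` `μ`-integrable
and `D` `ν`-integrable, of `α • ∫ log D dμ - ∫ D dν` equals
`α • KL(μ‖ν) + α log α - α` (`IsGreatest`: it is an attained supremum), and it is
attained at `D = α • dμ/dν`. -/
theorem stmt5 {Ω : Type*} [MeasurableSpace Ω] (μ ν : Measure Ω)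
    [IsProbabilityMeasure μ] [IsProbabilityMeasure ν]
    (hac : μ ≪ ν)
    (hKL : Integrable (fun ω => log ((μ.rnDeriv ν ω).toReal)) μ)
    (hpos : ∀ᵐ ω ∂ν, 0 < (μ.rnDeriv ν ω).toReal)
    (α : ℝ) (hα : 0 < α) :
    IsGreatest
      {v : ℝ | ∃ D : Ω → ℝ, Measurable D ∧ (∀ᵐ ω ∂ν, 0 < D ω) ∧
        Integrable (fun ω => log (D ω)) μ ∧ Integrable D ν ∧
        v = α * ∫ ω, log (D ω) ∂μ - ∫ ω, D ω ∂ν}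
      (α * ∫ ω, log ((μ.rnDeriv ν ω).toReal) ∂μ + α * log α - α) ∧
    α * ∫ ω, log (α * (μ.rnDeriv ν ω).toReal) ∂μ - ∫ ω, α * (μ.rnDeriv ν ω).toReal ∂ν =
      α * ∫ ω, log ((μ.rnDeriv ν ω).toReal) ∂μ + α * log α - α := by
  set f : Ω → ℝ := fun ω => (μ.rnDeriv ν ω).toReal with hf
  have hf_meas : Measurable f := (Measure.measurable_rnDeriv μ ν).ennreal_toReal
  have hposμ : ∀ᵐ ω ∂μ, 0 < f ω := hac.ae_le hpos
  have hint_fν : ∫ ω, f ω ∂ν = 1 := by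
    rw [Measure.integral_toReal_rnDeriv hac]; simp
  have hf_int : Integrable f ν := Measure.integrable_toReal_rnDeriv
  -- log (α * f) computation
  have hlog_eq : ∀ᵐ ω ∂μ, log (α * f ω) = log α + log (f ω) := by
    filter_upwards [hposμ] with ω hω
    rw [Real.log_mul hα.ne' hω.ne']
  have hlog_int : Integrable (fun ω => log (α * f ω)) μ :=
    ((integrable_const (log α)).add hKL).congr (by filter_upwards [hlog_eq] with ω h; simp [h]; rfl)
  have hlog_integral : ∫ ω, log (α * f ω) ∂μ = log α + ∫ ω, log (f ω) ∂μ := by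
    rw [integral_congr_ae hlog_eq, integral_add (integrable_const _) hKL, integral_const]
    simp
    rfl
  have heq : α * ∫ ω, log (α * f ω) ∂μ - ∫ ω, α * f ω ∂ν
      = α * ∫ ω, log (f ω) ∂μ + α * log α - α := by
    rw [hlog_integral, integral_const_mul, hint_fν]; ring
  refine ⟨⟨⟨fun ω => α * f ω, measurable_const.mul hf_meas, ?_, ?_, hf_int.const_mul α, heq.symm⟩,
      ?_⟩, heq⟩
  · filter_upwards [hpos] with ω hω; positivity
  · exact hlog_int
  · -- upper bound
    rintro v ⟨D, hD_meas, hD_pos, hD_log_int, hD_int, rfl⟩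
    have hDposμ : ∀ᵐ ω ∂μ, 0 < D ω := hac.ae_le hD_pos
    -- integrability of D/(α*f) w.r.t. μ
    have hquot_int : Integrable (fun ω => D ω / (α * f ω)) μ := by
      rw [← integrable_rnDeriv_smul_iff hac]
      refine (hD_int.const_mul (1/α)).congr ?_
      filter_upwards [hpos] with ω hω
      simp only [smul_eq_mul, hf]
      field_simp
    have hquot_integral : ∫ ω, D ω / (α * f ω) ∂μ = (∫ ω, D ω ∂ν) / α := by
      rw [← integral_rnDeriv_smul hac (f := fun ω => D ω / (α * f ω))]
      rw [show (∫ ω, D ω ∂ν) / α = ∫ ω, D ω / α ∂ν by rw [integral_div]]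
      refine integral_congr_ae ?_
      filter_upwards [hpos] with ω hω
      simp only [smul_eq_mul, hf]
      field_simp
    have hptwise : ∀ᵐ ω ∂μ, log (D ω) ≤ log (α * f ω) + (D ω / (α * f ω) - 1) := by
      filter_upwards [hposμ, hDposμ] with ω hfω hDω
      have hαf : 0 < α * f ω := by positivity
      have h1 : log (D ω / (α * f ω)) ≤ D ω / (α * f ω) - 1 :=
        Real.log_le_sub_one_of_pos (by positivity)
      rw [Real.log_div hDω.ne' hαf.ne'] at h1
      linarith
    have hsub : Integrable (fun ω => D ω / (α * f ω) - 1) μ :=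
      hquot_int.sub (integrable_const 1)
    have hIle : ∫ ω, log (D ω) ∂μ ≤ ∫ ω, log (α * f ω) + (D ω / (α * f ω) - 1) ∂μ :=
      integral_mono_ae hD_log_int (hlog_int.add hsub) hptwise
    have hIrhs : ∫ ω, log (α * f ω) + (D ω / (α * f ω) - 1) ∂μ
        = log α + ∫ ω, log (f ω) ∂μ + ((∫ ω, D ω ∂ν) / α - 1) := by
      rw [integral_add hlog_int hsub,
        integral_sub hquot_int (integrable_const 1), hlog_integral, hquot_integral,
        integral_const]
      simp
    rw [hIrhs] at hIle
    have := mul_le_mul_of_nonneg_left hIle hα.le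
    have hαinv : α * ((∫ ω, D ω ∂ν) / α) = ∫ ω, D ω ∂ν := by field_simp
    nlinarith [this]
end

section
/- Let μ and ν be probability measures on a measurable space Ω with μ absolutely continuous with respect to ν, finite Kullback–Leibler divergence KL(μ‖ν), and Radon–Nikodym derivative dμ/dν strictly positive ν-almost everywhere. Then the supremum, over all measurable functions D : Ω → ℝ that are strictly positive ν-almost everywhere with log∘D μ-integrable and D ν-integrable, of ∫ log(D) dμ − ∫ D dν + 1 equals KL(μ‖ν). -/
open MeasureTheory Real

/-- Let `μ, ν` be probability measures with `μ ≪ ν`, finite KL divergence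
`KL(μ‖ν) = ∫ log (dμ/dν) dμ` (finiteness expressed as integrability of `log (dμ/dν)`
with respect to `μ`), and `dμ/dν > 0` `ν`-a.e. The supremum over all measurable
`D : Ω → ℝ` that are `ν`-a.e. strictly positive, with `log ∘ D` `μ`-integrable and `D`
`ν`-integrable, of `∫ log D dμ - ∫ D dν + 1` equals `KL(μ‖ν)` (as an attained
supremum, `IsGreatest`). -/
theorem stmt6 {Ω : Type*} [MeasurableSpace Ω] (μ ν : Measure Ω)
    [IsProbabilityMeasure μ] [IsProbabilityMeasure ν]
    (hac : μ ≪ ν)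
    (hKL : Integrable (fun ω => log ((μ.rnDeriv ν ω).toReal)) μ)
    (hpos : ∀ᵐ ω ∂ν, 0 < (μ.rnDeriv ν ω).toReal) :
    IsGreatest
      {v : ℝ | ∃ D : Ω → ℝ, Measurable D ∧ (∀ᵐ ω ∂ν, 0 < D ω) ∧
        Integrable (fun ω => log (D ω)) μ ∧ Integrable D ν ∧
        v = ∫ ω, log (D ω) ∂μ - ∫ ω, D ω ∂ν + 1}
      (∫ ω, log ((μ.rnDeriv ν ω).toReal) ∂μ) := by
  set f : Ω → ℝ := fun ω => (μ.rnDeriv ν ω).toReal with hf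
  have hf_meas : Measurable f := (Measure.measurable_rnDeriv μ ν).ennreal_toReal
  have hfν : Integrable f ν := Measure.integrable_toReal_rnDeriv
  have hintf : ∫ ω, f ω ∂ν = 1 := by
    rw [Measure.integral_toReal_rnDeriv hac, probReal_univ]
  constructor
  · exact ⟨f, hf_meas, hpos, hKL, hfν, by rw [hintf]; ring⟩
  · rintro v ⟨D, hD_meas, hD_pos, hlogD, hDν, rfl⟩
    have hμpos : ∀ᵐ ω ∂μ, 0 < f ω := hac.ae_le hpos
    have hDμpos : ∀ᵐ ω ∂μ, 0 < D ω := hac.ae_le hD_pos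
    set g : Ω → ℝ := fun ω => D ω / f ω with hg
    have hg_meas : Measurable g := hD_meas.div hf_meas
    -- lintegral computation
    have hlt : ∀ᵐ ω ∂ν, μ.rnDeriv ν ω < ⊤ := Measure.rnDeriv_lt_top μ ν
    have hkey : ∫⁻ ω, ENNReal.ofReal (g ω) ∂μ = ENNReal.ofReal (∫ ω, D ω ∂ν) := by
      conv_lhs => rw [← Measure.withDensity_rnDeriv_eq μ ν hac]
      rw [lintegral_withDensity_eq_lintegral_mul _ (Measure.measurable_rnDeriv μ ν)
        (hg_meas.ennreal_ofReal)]
      rw [show (∫⁻ ω, (μ.rnDeriv ν * fun x => ENNReal.ofReal (g x)) ω ∂ν)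
          = ∫⁻ ω, ENNReal.ofReal (D ω) ∂ν from lintegral_congr_ae ?_,
        ← ofReal_integral_eq_lintegral_ofReal hDν (hD_pos.mono fun ω h => h.le)]
      filter_upwards [hpos, hD_pos, hlt] with ω hfω hDω hltω
      have hne : μ.rnDeriv ν ω ≠ ⊤ := hltω.ne
      have : μ.rnDeriv ν ω = ENNReal.ofReal (f ω) := by
        simp [hf, ENNReal.ofReal_toReal hne]
      simp only [Pi.mul_apply, this, hg]
      rw [← ENNReal.ofReal_mul (ENNReal.toReal_nonneg)]
      congr 1
      field_simp
      exact div_self hfω.ne'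
    have hg_nonneg : ∀ᵐ ω ∂μ, 0 ≤ g ω := by
      filter_upwards [hμpos, hDμpos] with ω h1 h2
      exact div_nonneg h2.le h1.le
    have hg_int : Integrable g μ := by
      refine ⟨hg_meas.aestronglyMeasurable, ?_⟩
      rw [hasFiniteIntegral_iff_ofReal hg_nonneg, hkey]
      exact ENNReal.ofReal_lt_top
    have hintg : ∫ ω, g ω ∂μ = ∫ ω, D ω ∂ν := by
      rw [integral_eq_lintegral_of_nonneg_ae hg_nonneg hg_meas.aestronglyMeasurable, hkey,
        ENNReal.toReal_ofReal (integral_nonneg_of_ae (hD_pos.mono fun ω h => h.le))]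
    have hlog_eq : ∀ᵐ ω ∂μ, log (D ω) - log (f ω) = log (g ω) := by
      filter_upwards [hμpos, hDμpos] with ω h1 h2
      rw [hg, Real.log_div h2.ne' h1.ne']
    have hlogg_int : Integrable (fun ω => log (g ω)) μ :=
      (hlogD.sub hKL).congr hlog_eq
    have hmono : ∫ ω, log (g ω) ∂μ ≤ ∫ ω, (g ω - 1) ∂μ := by
      refine integral_mono_ae hlogg_int (hg_int.sub (integrable_const 1)) ?_
      filter_upwards [hμpos, hDμpos] with ω h1 h2
      exact Real.log_le_sub_one_of_pos (div_pos h2 h1)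
    have h1 : ∫ ω, log (g ω) ∂μ = ∫ ω, log (D ω) ∂μ - ∫ ω, log (f ω) ∂μ := by
      rw [← integral_sub hlogD hKL]
      refine integral_congr_ae ?_
      filter_upwards [hlog_eq] with ω h
      exact h.symm
    have h2 : ∫ ω, (g ω - 1) ∂μ = ∫ ω, D ω ∂ν - 1 := by
      rw [integral_sub hg_int (integrable_const 1), hintg, integral_const, probReal_univ]
      simp
    rw [h1, h2] at hmono
    linarith
end

section
/- Let μ and ν be probability measures on a measurable space Ω with μ absolutely continuous with respect to ν, finite Kullback–Leibler divergence KL(μ‖ν), and Radon–Nikodym derivative dμ/dν strictly positive ν-almost everywhere. Let α > 0 and let D : Ω → ℝ be measurable, strictly positive ν-almost everywhere, with log∘D μ-integrable and D ν-integrable. If α·∫ log(D) dμ − ∫ D dν = α·KL(μ‖ν) + α·log(α) − α, then D = α·(dμ/dν) ν-almost everywhere. -/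
open MeasureTheory Real

/-- Uniqueness of the optimal discriminator. Let `μ, ν` be probability measures with
`μ ≪ ν`, finite KL divergence `KL(μ‖ν) = ∫ log (dμ/dν) dμ` (finiteness expressed as
integrability of `log (dμ/dν)` with respect to `μ`), and `dμ/dν > 0` `ν`-a.e. Let
`α > 0` and `D` measurable, `ν`-a.e. strictly positive, with `log ∘ D` `μ`-integrable
and `D` `ν`-integrable. If `α • ∫ log D dμ - ∫ D dν = α • KL(μ‖ν) + α log α - α`,
then `D = α • dμ/dν` `ν`-almost everywhere. -/
theorem stmt7 {Ω : Type*} [MeasurableSpace Ω] (μ ν : Measure Ω)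
    [IsProbabilityMeasure μ] [IsProbabilityMeasure ν]
    (hac : μ ≪ ν)
    (hKL : Integrable (fun ω => log ((μ.rnDeriv ν ω).toReal)) μ)
    (hpos : ∀ᵐ ω ∂ν, 0 < (μ.rnDeriv ν ω).toReal)
    (α : ℝ) (hα : 0 < α)
    (D : Ω → ℝ) (hDmeas : Measurable D)
    (hDpos : ∀ᵐ ω ∂ν, 0 < D ω)
    (hlogD : Integrable (fun ω => log (D ω)) μ)
    (hD : Integrable D ν)
    (heq : α * ∫ ω, log (D ω) ∂μ - ∫ ω, D ω ∂ν =
      α * ∫ ω, log ((μ.rnDeriv ν ω).toReal) ∂μ + α * log α - α) :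
    ∀ᵐ ω ∂ν, D ω = α * (μ.rnDeriv ν ω).toReal := by
  set r : Ω → ℝ := fun ω => (μ.rnDeriv ν ω).toReal with hr
  set f : Ω → ℝ := fun ω => D ω / (α * r ω) with hf
  -- ν ≪ μ
  have hνμ : ν ≪ μ := by
    rw [← Measure.withDensity_rnDeriv_eq μ ν hac]
    refine withDensity_absolutelyContinuous' (Measure.measurable_rnDeriv μ ν).aemeasurable ?_
    filter_upwards [hpos] with ω hω
    exact fun h => by simp [h] at hω
  have hrposμ : ∀ᵐ ω ∂μ, 0 < r ω := hac.ae_le hpos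
  have hDposμ : ∀ᵐ ω ∂μ, 0 < D ω := hac.ae_le hDpos
  -- f integrable μ, and ∫ f dμ = (∫ D dν) / α
  have hsmul : (fun ω => r ω • f ω) =ᵐ[ν] fun ω => D ω / α := by
    filter_upwards [hpos] with ω hω
    field_simp [hf]
    have hr0 : r ω ≠ 0 := hω.ne'
    simp only [hf, smul_eq_mul]
    field_simp
  have hf_int : Integrable f μ := by
    rw [← integrable_rnDeriv_smul_iff hac]
    exact (hD.div_const α).congr hsmul.symm
  have hint_f : ∫ ω, f ω ∂μ = (∫ ω, D ω ∂ν) / α := by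
    rw [← integral_rnDeriv_smul hac (f := f), integral_congr_ae hsmul,
      integral_div]
  -- log f decomposition
  have hlogf : (fun ω => log (f ω)) =ᵐ[μ] fun ω => log (D ω) - log α - log (r ω) := by
    filter_upwards [hrposμ, hDposμ] with ω h1 h2
    rw [hf, log_div h2.ne' (by positivity), log_mul hα.ne' h1.ne']
    ring
  have hlogf_int : Integrable (fun ω => log (f ω)) μ :=
    (((hlogD.sub (integrable_const (log α))).sub hKL)).congr hlogf.symm
  have hint_logf : ∫ ω, log (f ω) ∂μ = ∫ ω, f ω ∂μ - 1 := by
    rw [integral_congr_ae hlogf, hint_f]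
    have i1 : Integrable (fun ω => log (D ω) - log α) μ := hlogD.sub (integrable_const _)
    have h1 : ∫ ω, (log (D ω) - log α - log (r ω)) ∂μ
        = ∫ ω, log (D ω) ∂μ - log α - ∫ ω, log (r ω) ∂μ := by
      rw [integral_sub i1 hKL, integral_sub hlogD (integrable_const _), integral_const]
      simp
      rfl
    rw [h1]
    have := heq
    field_simp
    nlinarith [this]
  -- nonneg difference with zero integral
  have hkey : ∀ᵐ ω ∂μ, f ω - 1 - log (f ω) = 0 := by
    have hnn : 0 ≤ᵐ[μ] fun ω => f ω - 1 - log (f ω) := by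
      filter_upwards [hrposμ, hDposμ] with ω h1 h2
      have hfpos : 0 < f ω := by positivity
      have := log_le_sub_one_of_pos hfpos
      simp only [Pi.zero_apply]
      linarith
    have i2 : Integrable (fun ω => f ω - 1) μ := hf_int.sub (integrable_const 1)
    have hint : Integrable (fun ω => f ω - 1 - log (f ω)) μ := i2.sub hlogf_int
    have hz : ∫ ω, (f ω - 1 - log (f ω)) ∂μ = 0 := by
      rw [integral_sub i2 hlogf_int, integral_sub hf_int (integrable_const 1),
        integral_const, hint_logf]
      simp
    have := (integral_eq_zero_iff_of_nonneg_ae hnn hint).mp hz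
    filter_upwards [this] with ω hω using hω
  -- conclude f = 1 μ-a.e., hence ν-a.e.
  have hfμ : ∀ᵐ ω ∂μ, f ω = 1 := by
    filter_upwards [hkey, hrposμ, hDposμ] with ω h0 h1 h2
    by_contra hne
    have hfpos : 0 < f ω := by positivity
    have := log_lt_sub_one_of_pos hfpos hne
    linarith
  filter_upwards [hνμ.ae_le hfμ, hpos, hDpos] with ω h0 h1 h2
  have : D ω = α * r ω := by
    have hne : α * r ω ≠ 0 := by positivity
    simp only [hf] at h0
    have hr0 : r ω ≠ 0 := h1.ne'
    field_simp at h0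
    linarith [h0]
  exact this
end

section
/- Let X and Y be measurable spaces, κ a Markov kernel from X to Y, and μ a probability measure on X. Let π = μ ⊗ κ be the joint law on X × Y (the composition-product of μ and κ) and let ρ = μ × (κ ∘ μ) be the product of the marginals, where κ ∘ μ is the pushforward output law. Assume π ≪ ρ, the Radon–Nikodym derivative dπ/dρ is strictly positive ρ-almost everywhere, and KL(π‖ρ) < ∞. Then for every α > 0, the supremum over all measurable D : X × Y → ℝ that are strictly positive ρ-almost everywhere, with log∘D π-integrable and D ρ-integrable, of α·∫ log(D) dπ − ∫ D dρ equals α·(KL(π‖ρ) + log(α) − 1). -/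
open MeasureTheory ProbabilityTheory Real

/-- Let `κ` be a Markov kernel from `X` to `Y` and `μ` a probability measure on `X`.
Let `P = μ ⊗ₘ κ` be the joint law and `Q = μ × (κ ∘ μ)` the product of the marginals,
where the output law `κ ∘ μ` is `μ.bind κ`. Assume `P ≪ Q`, `dP/dQ > 0` `Q`-a.e., and
`KL(P‖Q) = ∫ log (dP/dQ) dP` is finite (expressed as integrability of `log (dP/dQ)`
with respect to `P`). Then for every `α > 0` the supremum over all measurable
`D : X × Y → ℝ`, `Q`-a.e. strictly positive, with `log ∘ D` `P`-integrable and `D`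
`Q`-integrable, of `α • ∫ log D dP - ∫ D dQ` equals `α • (KL(P‖Q) + log α - 1)`
(as an attained supremum, `IsGreatest`). -/
theorem stmt8 {X Y : Type*} [MeasurableSpace X] [MeasurableSpace Y]
    (κ : Kernel X Y) [IsMarkovKernel κ]
    (μ : Measure X) [IsProbabilityMeasure μ]
    (P Q : Measure (X × Y))
    (hP : P = μ ⊗ₘ κ)
    (hQ : Q = μ.prod (μ.bind (fun x => κ x)))
    (hac : P ≪ Q)
    (hpos : ∀ᵐ ω ∂Q, 0 < (P.rnDeriv Q ω).toReal)
    (hKL : Integrable (fun ω => log ((P.rnDeriv Q ω).toReal)) P)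
    (α : ℝ) (hα : 0 < α) :
    IsGreatest
      {v : ℝ | ∃ D : X × Y → ℝ, Measurable D ∧ (∀ᵐ ω ∂Q, 0 < D ω) ∧
        Integrable (fun ω => log (D ω)) P ∧ Integrable D Q ∧
        v = α * ∫ ω, log (D ω) ∂P - ∫ ω, D ω ∂Q}
      (α * ((∫ ω, log ((P.rnDeriv Q ω).toReal) ∂P) + log α - 1)) := by
  have hPprob : IsProbabilityMeasure P := by
    rw [hP]; infer_instance
  have hQfin : IsFiniteMeasure Q := by
    rw [hQ]
    have : IsProbabilityMeasure (μ.bind (fun x => κ x)) := by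
      constructor
      rw [Measure.bind_apply MeasurableSet.univ (Kernel.measurable κ).aemeasurable]
      simp
    infer_instance
  set f : X × Y → ℝ := fun ω => (P.rnDeriv Q ω).toReal with hf
  have hfm : Measurable f := (P.measurable_rnDeriv Q).ennreal_toReal
  have hposP : ∀ᵐ ω ∂P, 0 < f ω := hac.ae_le hpos
  have hfint : Integrable f Q := Measure.integrable_toReal_rnDeriv
  have hfint1 : ∫ ω, f ω ∂Q = 1 := by
    rw [hf, Measure.integral_toReal_rnDeriv hac]
    simp
  constructor
  · -- membership: D = α * f
    refine ⟨fun ω => α * f ω, (measurable_const.mul hfm), ?_, ?_, ?_, ?_⟩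
    · filter_upwards [hpos] with ω hω using mul_pos hα hω
    · have : ∀ᵐ ω ∂P, log (α * f ω) = log α + log (f ω) := by
        filter_upwards [hposP] with ω hω using Real.log_mul hα.ne' hω.ne'
      exact (Integrable.add (integrable_const _) hKL).congr (by filter_upwards [this] with ω hω using hω.symm)
    · exact hfint.const_mul α
    · have h1 : ∫ ω, log (α * f ω) ∂P = log α + ∫ ω, log (f ω) ∂P := by
        rw [integral_congr_ae (g := fun ω => log α + log (f ω))
          (by filter_upwards [hposP] with ω hω using Real.log_mul hα.ne' hω.ne'),
          integral_add (integrable_const _) hKL, integral_const]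
        simp
        rfl
      have h2 : ∫ ω, α * f ω ∂Q = α := by
        rw [integral_const_mul, hfint1, mul_one]
      rw [h1, h2]; ring
  · -- upper bound
    rintro v ⟨D, hDm, hDpos, hDlogint, hDint, hv⟩
    have hDposP : ∀ᵐ ω ∂P, 0 < D ω := hac.ae_le hDpos
    set g : X × Y → ℝ := fun ω => D ω / (α * f ω) with hg
    -- log g = log D - log α - log f  a.e. P
    have hlogg : ∀ᵐ ω ∂P, log (g ω) = log (D ω) - log α - log (f ω) := by
      filter_upwards [hposP, hDposP] with ω h1 h2
      rw [hg]
      rw [Real.log_div h2.ne' (mul_pos hα h1).ne', Real.log_mul hα.ne' h1.ne']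
      ring
    have hloggint : Integrable (fun ω => log (g ω)) P :=
      ((hDlogint.sub (integrable_const (log α))).sub hKL).congr
        (by filter_upwards [hlogg] with ω hω using hω.symm)
    -- g integrable wrt P
    have hgint : Integrable g P := by
      rw [← integrable_rnDeriv_smul_iff hac]
      have : (fun ω => (P.rnDeriv Q ω).toReal • g ω) =ᵐ[Q] fun ω => D ω / α := by
        filter_upwards [hpos] with ω hω
        rw [hg]
        simp only [hf]
        field_simp
        rw [smul_eq_mul]; field_simp
      exact (hDint.div_const α).congr this.symm
    -- ∫ g dP = (∫ D dQ) / α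
    have hgint_eq : ∫ ω, g ω ∂P = (∫ ω, D ω ∂Q) / α := by
      rw [← integral_rnDeriv_smul hac (f := g)]
      rw [integral_congr_ae (g := fun ω => D ω / α)
        (by filter_upwards [hpos] with ω hω; rw [hg]; simp only [hf]; field_simp; rw [smul_eq_mul]; field_simp)]
      rw [integral_div]
    -- log g ≤ g - 1 a.e. P
    have hle : ∫ ω, log (g ω) ∂P ≤ ∫ ω, g ω ∂P - 1 := by
      have : ∫ ω, g ω ∂P - 1 = ∫ ω, (g ω - 1) ∂P := by
        rw [integral_sub hgint (integrable_const 1), integral_const]; simp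
      rw [this]
      refine integral_mono_ae hloggint (hgint.sub (integrable_const 1)) ?_
      filter_upwards [hposP, hDposP] with ω h1 h2
      exact Real.log_le_sub_one_of_pos (div_pos h2 (mul_pos hα h1))
    have hlogg_eq : ∫ ω, log (g ω) ∂P
        = ∫ ω, log (D ω) ∂P - log α - ∫ ω, log (f ω) ∂P := by
      have h1 : Integrable (fun ω => log (D ω) - log α) P := hDlogint.sub (integrable_const _)
      rw [integral_congr_ae hlogg, integral_sub h1 hKL,
        integral_sub hDlogint (integrable_const _), integral_const]
      simp
      rfl
    rw [hlogg_eq, hgint_eq] at hle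
    rw [hv]
    have h2 : α * ((∫ ω, D ω ∂Q) / α) = ∫ ω, D ω ∂Q := mul_div_cancel₀ _ hα.ne'
    nlinarith [mul_le_mul_of_nonneg_left hle hα.le, h2]
end

section
/- Let X and Y be measurable spaces, κ a Markov kernel from X to Y, and let M be a set of probability measures μ on X such that for each μ ∈ M the joint law π_μ = μ ⊗ κ is absolutely continuous with respect to the product of marginals ρ_μ = μ × (κ ∘ μ), with dπ_μ/dρ_μ strictly positive ρ_μ-a.e. and I(μ) := KL(π_μ‖ρ_μ) < ∞. Define for α > 0 and admissible discriminators D (measurable D : X × Y → ℝ, strictly positive ρ_μ-a.e., log∘D π_μ-integrable, D ρ_μ-integrable) the value J_α(μ, D) = α·∫ log(D) dπ_μ − ∫ D dρ_μ. Then sup_{μ ∈ M} sup_D J_α(μ, D) / α + 1 − log(α) = sup_{μ ∈ M} I(μ); that is, the CORTICAL game recovers the channel capacity C = sup_{μ ∈ M} I(μ). -/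
open MeasureTheory ProbabilityTheory

lemma cortical_le {Ω : Type*} [MeasurableSpace Ω] (π ρ : Measure Ω)
    [IsProbabilityMeasure π] [IsProbabilityMeasure ρ] (hac : π ≪ ρ)
    (hpos : ∀ᵐ ω ∂ρ, 0 < (π.rnDeriv ρ ω).toReal)
    (α : ℝ) (hα : 0 < α) (D : Ω → ℝ)
    (hDpos : ∀ᵐ ω ∂ρ, 0 < D ω)
    (hlogD : Integrable (fun ω => Real.log (D ω)) π)
    (hlogp : Integrable (fun ω => Real.log ((π.rnDeriv ρ ω).toReal)) π)
    (hDint : Integrable D ρ) :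
    α * ∫ ω, Real.log (D ω) ∂π - ∫ ω, D ω ∂ρ ≤
      α * ∫ ω, Real.log ((π.rnDeriv ρ ω).toReal) ∂π + α * Real.log α - α := by
  set p : Ω → ℝ := fun ω => (π.rnDeriv ρ ω).toReal with hp
  have hpπ : ∀ᵐ ω ∂π, 0 < p ω := hac.ae_le hpos
  have hDπ : ∀ᵐ ω ∂π, 0 < D ω := hac.ae_le hDpos
  set f : Ω → ℝ := fun ω => D ω / p ω with hf
  have h_smul : (fun ω => (π.rnDeriv ρ ω).toReal • f ω) =ᵐ[ρ] D := by
    filter_upwards [hpos] with ω hω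
    simp only [hf, smul_eq_mul]
    field_simp [hp]
    exact mul_div_cancel_left₀ (D ω) hω.ne'
  have h_int_smul : Integrable (fun ω => (π.rnDeriv ρ ω).toReal • f ω) ρ :=
    hDint.congr h_smul.symm
  have hf_int : Integrable f π := (integrable_rnDeriv_smul_iff hac).mp h_int_smul
  have h_eq : ∫ ω, D ω ∂ρ = ∫ ω, f ω ∂π := by
    rw [← integral_rnDeriv_smul hac (f := f)]
    exact integral_congr_ae h_smul.symm
  have h_ae : ∀ᵐ ω ∂π,
      Real.log (D ω) ≤ Real.log α + Real.log (p ω) + (f ω / α - 1) := by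
    filter_upwards [hpπ, hDπ] with ω hpω hDω
    have h1 : Real.log (D ω / (α * p ω)) ≤ D ω / (α * p ω) - 1 :=
      Real.log_le_sub_one_of_pos (by positivity)
    have h2 : Real.log (D ω / (α * p ω)) = Real.log (D ω) - (Real.log α + Real.log (p ω)) := by
      rw [Real.log_div hDω.ne' (by positivity), Real.log_mul hα.ne' hpω.ne']
    have h3 : D ω / (α * p ω) = f ω / α := by
      simp only [hf]; rw [div_div, mul_comm]
    rw [h2, h3] at h1
    linarith
  have hi1 : Integrable (fun ω => Real.log α + Real.log (p ω)) π :=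
    (integrable_const _).add hlogp
  have hi2 : Integrable (fun ω => f ω / α - 1) π :=
    (hf_int.div_const α).sub (integrable_const 1)
  have h_int_rhs : Integrable
      (fun ω => Real.log α + Real.log (p ω) + (f ω / α - 1)) π := hi1.add hi2
  have h_le := integral_mono_ae hlogD h_int_rhs h_ae
  have h_int_eval : ∫ ω, (Real.log α + Real.log (p ω) + (f ω / α - 1)) ∂π
      = Real.log α + ∫ ω, Real.log (p ω) ∂π + ((∫ ω, f ω ∂π) / α - 1) := by
    rw [integral_add hi1 hi2, integral_add (integrable_const _) hlogp,
      integral_sub (hf_int.div_const α) (integrable_const 1),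
      integral_const, integral_const, integral_div]
    simp [measure_univ]
    rfl
  rw [h_int_eval] at h_le
  have h3 := mul_le_mul_of_nonneg_left h_le hα.le
  have h4 : α * (Real.log α + ∫ ω, Real.log (p ω) ∂π + ((∫ ω, f ω ∂π) / α - 1))
      = α * Real.log α + α * ∫ ω, Real.log (p ω) ∂π + ((∫ ω, f ω ∂π) - α) := by
    field_simp
  rw [h_eq]
  rw [h4] at h3
  linarith

lemma cortical_opt {Ω : Type*} [MeasurableSpace Ω] (π ρ : Measure Ω)
    [IsProbabilityMeasure π] [IsProbabilityMeasure ρ] (hac : π ≪ ρ)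
    (hpos : ∀ᵐ ω ∂ρ, 0 < (π.rnDeriv ρ ω).toReal)
    (hlogp : Integrable (fun ω => Real.log ((π.rnDeriv ρ ω).toReal)) π)
    (α : ℝ) (hα : 0 < α) :
    ∃ D : Ω → ℝ, Measurable D ∧ (∀ᵐ ω ∂ρ, 0 < D ω) ∧
      Integrable (fun ω => Real.log (D ω)) π ∧ Integrable D ρ ∧
      α * ∫ ω, Real.log (D ω) ∂π - ∫ ω, D ω ∂ρ
        = α * ∫ ω, Real.log ((π.rnDeriv ρ ω).toReal) ∂π + α * Real.log α - α := by
  set p : Ω → ℝ := fun ω => (π.rnDeriv ρ ω).toReal with hp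
  have hpπ : ∀ᵐ ω ∂π, 0 < p ω := hac.ae_le hpos
  refine ⟨fun ω => α * p ω, ?_, ?_, ?_, ?_, ?_⟩
  · exact (measurable_const.mul (Measure.measurable_rnDeriv π ρ).ennreal_toReal)
  · filter_upwards [hpos] with ω hω; positivity
  · have hi : Integrable (fun ω => Real.log α + Real.log (p ω)) π :=
      (integrable_const _).add hlogp
    apply hi.congr
    filter_upwards [hpπ] with ω hω
    rw [Real.log_mul hα.ne' hω.ne']
  · exact (Measure.integrable_toReal_rnDeriv).const_mul α
  · have h1 : ∫ ω, Real.log (α * p ω) ∂π = Real.log α + ∫ ω, Real.log (p ω) ∂π := by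
      rw [show (Real.log α + ∫ ω, Real.log (p ω) ∂π)
          = ∫ ω, (Real.log α + Real.log (p ω)) ∂π by
        rw [integral_add (integrable_const _) hlogp, integral_const]
        simp [measure_univ]; rfl]
      apply integral_congr_ae
      filter_upwards [hpπ] with ω hω
      rw [Real.log_mul hα.ne' hω.ne']
    have h2 : ∫ ω, α * p ω ∂ρ = α := by
      rw [integral_const_mul, Measure.integral_toReal_rnDeriv hac]
      simp [measure_univ]
    rw [h1, h2]; ring


/-- The joint law `μ ⊗ κ` of the channel input (with law `μ`) and the channel output. -/
noncomputable def jointLaw {X Y : Type*} [MeasurableSpace X] [MeasurableSpace Y]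
    (κ : Kernel X Y) (μ : Measure X) : Measure (X × Y) :=
  μ ⊗ₘ κ

/-- The product `μ × (κ ∘ μ)` of the input law `μ` and the output law `κ ∘ μ = μ.bind κ`. -/
noncomputable def margLaw {X Y : Type*} [MeasurableSpace X] [MeasurableSpace Y]
    (κ : Kernel X Y) (μ : Measure X) : Measure (X × Y) :=
  μ.prod (μ.bind (fun x => κ x))

/-- The mutual information `I(μ) = KL(μ⊗κ ‖ μ×(κ∘μ)) = ∫ log (dπ_μ/dρ_μ) dπ_μ`. -/
noncomputable def mutInfo {X Y : Type*} [MeasurableSpace X] [MeasurableSpace Y]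
    (κ : Kernel X Y) (μ : Measure X) : ℝ :=
  ∫ ω, Real.log (((jointLaw κ μ).rnDeriv (margLaw κ μ) ω).toReal) ∂(jointLaw κ μ)

/-- Theorem 1 of the paper: for a Markov kernel (channel) `κ` and a nonempty family `M`
of admissible input probability laws `μ` (each with `π_μ = μ ⊗ κ ≪ ρ_μ = μ × (κ ∘ μ)`,
`dπ_μ/dρ_μ > 0` `ρ_μ`-a.e. and finite mutual information `I(μ) = KL(π_μ‖ρ_μ)`, the
family having bounded mutual information so that the capacity is finite), and any
`α > 0`, the supremum over `μ ∈ M` and over admissible discriminators `D` of the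
CORTICAL value `J_α(μ, D) = α ∫ log D dπ_μ - ∫ D dρ_μ`, renormalized via
`v ↦ v / α + 1 - log α`, equals the channel capacity `C = sup_{μ ∈ M} I(μ)`. -/
theorem stmt9 {X Y : Type*} [MeasurableSpace X] [MeasurableSpace Y]
    (κ : Kernel X Y) [IsMarkovKernel κ]
    (M : Set (Measure X))
    (hprob : ∀ μ ∈ M, IsProbabilityMeasure μ)
    (hac : ∀ μ ∈ M, jointLaw κ μ ≪ margLaw κ μ)
    (hpos : ∀ μ ∈ M, ∀ᵐ ω ∂(margLaw κ μ),
      0 < (((jointLaw κ μ).rnDeriv (margLaw κ μ)) ω).toReal)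
    (hKL : ∀ μ ∈ M, Integrable
      (fun ω => Real.log (((jointLaw κ μ).rnDeriv (margLaw κ μ) ω).toReal)) (jointLaw κ μ))
    (hne : M.Nonempty)
    (hbdd : BddAbove (mutInfo κ '' M))
    (α : ℝ) (hα : 0 < α) :
    sSup {v : ℝ | ∃ μ ∈ M, ∃ D : X × Y → ℝ, Measurable D ∧
        (∀ᵐ ω ∂(margLaw κ μ), 0 < D ω) ∧
        Integrable (fun ω => Real.log (D ω)) (jointLaw κ μ) ∧
        Integrable D (margLaw κ μ) ∧
        v = α * ∫ ω, Real.log (D ω) ∂(jointLaw κ μ) - ∫ ω, D ω ∂(margLaw κ μ)}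
      / α + 1 - Real.log α
      = sSup (mutInfo κ '' M) := by
  set C := sSup (mutInfo κ '' M) with hC
  have hπprob : ∀ μ ∈ M, IsProbabilityMeasure (jointLaw κ μ) := fun μ hμ => by
    haveI := hprob μ hμ
    unfold jointLaw; infer_instance
  have hρprob : ∀ μ ∈ M, IsProbabilityMeasure (margLaw κ μ) := fun μ hμ => by
    haveI := hprob μ hμ
    haveI : IsProbabilityMeasure (μ.bind fun x => κ x) := by
      constructor
      rw [Measure.bind_apply MeasurableSet.univ (Kernel.measurable κ).aemeasurable]
      simp
    unfold margLaw; infer_instance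
  set S := {v : ℝ | ∃ μ ∈ M, ∃ D : X × Y → ℝ, Measurable D ∧
        (∀ᵐ ω ∂(margLaw κ μ), 0 < D ω) ∧
        Integrable (fun ω => Real.log (D ω)) (jointLaw κ μ) ∧
        Integrable D (margLaw κ μ) ∧
        v = α * ∫ ω, Real.log (D ω) ∂(jointLaw κ μ) - ∫ ω, D ω ∂(margLaw κ μ)} with hSdef
  have hub : ∀ v ∈ S, v ≤ α * C + α * Real.log α - α := by
    rintro v ⟨μ, hμ, D, hDm, hDpos, hlogD, hDint, rfl⟩
    haveI := hπprob μ hμ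
    haveI := hρprob μ hμ
    have h1 := cortical_le (jointLaw κ μ) (margLaw κ μ) (hac μ hμ) (hpos μ hμ)
      α hα D hDpos hlogD (hKL μ hμ) hDint
    have h2 : mutInfo κ μ ≤ C := le_csSup hbdd ⟨μ, hμ, rfl⟩
    have h3 : α * mutInfo κ μ ≤ α * C := mul_le_mul_of_nonneg_left h2 hα.le
    rw [mutInfo] at h3
    linarith
  have hmem : ∀ μ ∈ M, α * mutInfo κ μ + α * Real.log α - α ∈ S := by
    intro μ hμ
    haveI := hπprob μ hμ
    haveI := hρprob μ hμ
    obtain ⟨D, hDm, hDpos, hlogD, hDint, heq⟩ := cortical_opt (jointLaw κ μ) (margLaw κ μ)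
      (hac μ hμ) (hpos μ hμ) (hKL μ hμ) α hα
    exact ⟨μ, hμ, D, hDm, hDpos, hlogD, hDint, by rw [mutInfo, ← heq]⟩
  obtain ⟨μ₀, hμ₀⟩ := hne
  have hSne : S.Nonempty := ⟨_, hmem μ₀ hμ₀⟩
  have hSbdd : BddAbove S := ⟨α * C + α * Real.log α - α, hub⟩
  have hsup : sSup S = α * C + α * Real.log α - α := by
    refine le_antisymm (csSup_le hSne hub) ?_
    have hkey : ∀ μ ∈ M, α * mutInfo κ μ + α * Real.log α - α ≤ sSup S :=
      fun μ hμ => le_csSup hSbdd (hmem μ hμ)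
    have hCle : C ≤ (sSup S - α * Real.log α + α) / α := by
      refine csSup_le ⟨_, ⟨μ₀, hμ₀, rfl⟩⟩ ?_
      rintro _ ⟨μ, hμ, rfl⟩
      rw [le_div_iff₀ hα]
      have := hkey μ hμ
      linarith
    have := mul_le_mul_of_nonneg_left hCle hα.le
    have hid : α * ((sSup S - α * Real.log α + α) / α) = sSup S - α * Real.log α + α := by
      field_simp
    linarith
  rw [hsup]
  field_simp
  ring
end

section
/- Let X and Y be measurable spaces, κ a Markov kernel from X to Y, and M a set of probability measures μ on X such that for each μ ∈ M, π_μ = μ ⊗ κ ≪ ρ_μ = μ × (κ ∘ μ), dπ_μ/dρ_μ > 0 ρ_μ-a.e., and I(μ) := KL(π_μ‖ρ_μ) < ∞. Fix α > 0 and define V_α(μ) = sup_D [α·∫ log(D) dπ_μ − ∫ D dρ_μ], the supremum over admissible discriminators D. Then a measure μ* ∈ M attains the supremum of V_α over M if and only if μ* attains the supremum of I over M, i.e., the capacity-achieving input distributions coincide with the maximizers of the CORTICAL value function. -/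
open MeasureTheory ProbabilityTheory

/-- The CORTICAL value function of an input law `μ`:
`V_α(μ) = sup_D [α ∫ log D dπ_μ - ∫ D dρ_μ]` over admissible discriminators `D`. -/
noncomputable def corticalValue {X Y : Type*} [MeasurableSpace X] [MeasurableSpace Y]
    (κ : Kernel X Y) (α : ℝ) (μ : Measure X) : ℝ :=
  sSup {v : ℝ | ∃ D : X × Y → ℝ, Measurable D ∧
    (∀ᵐ ω ∂(margLaw κ μ), 0 < D ω) ∧
    Integrable (fun ω => Real.log (D ω)) (jointLaw κ μ) ∧
    Integrable D (margLaw κ μ) ∧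
    v = α * ∫ ω, Real.log (D ω) ∂(jointLaw κ μ) - ∫ ω, D ω ∂(margLaw κ μ)}

lemma margLaw_prob {X Y : Type*} [MeasurableSpace X] [MeasurableSpace Y]
    (κ : Kernel X Y) [IsMarkovKernel κ] (μ : Measure X) [IsProbabilityMeasure μ] :
    IsProbabilityMeasure (margLaw κ μ) := by
  have : IsProbabilityMeasure (μ.bind (fun x => κ x)) := by
    constructor
    rw [Measure.bind_apply MeasurableSet.univ (Kernel.measurable κ).aemeasurable]
    simp
  exact Measure.prod.instIsProbabilityMeasure _ _

lemma corticalValue_eq {X Y : Type*} [MeasurableSpace X] [MeasurableSpace Y]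
    (κ : Kernel X Y) [IsMarkovKernel κ] (μ : Measure X) (hprob : IsProbabilityMeasure μ)
    (hac : jointLaw κ μ ≪ margLaw κ μ)
    (hpos : ∀ᵐ ω ∂(margLaw κ μ), 0 < (((jointLaw κ μ).rnDeriv (margLaw κ μ)) ω).toReal)
    (hKL : Integrable
      (fun ω => Real.log (((jointLaw κ μ).rnDeriv (margLaw κ μ) ω).toReal)) (jointLaw κ μ))
    {α : ℝ} (hα : 0 < α) :
    corticalValue κ α μ = α * mutInfo κ μ + (α * Real.log α - α) := by
  classical
  set π := jointLaw κ μ with hπ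
  set ρ := margLaw κ μ with hρ
  haveI : IsProbabilityMeasure π := by
    rw [hπ]; unfold jointLaw; infer_instance
  haveI : IsProbabilityMeasure ρ := margLaw_prob κ μ
  set r : X × Y → ℝ := fun ω => ((π.rnDeriv ρ) ω).toReal with hr
  have hrmeas : Measurable r := (Measure.measurable_rnDeriv π ρ).ennreal_toReal
  have hrint : Integrable r ρ := Measure.integrable_toReal_rnDeriv
  have hposπ : ∀ᵐ ω ∂π, 0 < r ω := hac.ae_le hpos
  -- the optimal discriminator
  set D0 : X × Y → ℝ := fun ω => α * r ω with hD0
  have hlogD0 : ∀ᵐ ω ∂π, Real.log (D0 ω) = Real.log α + Real.log (r ω) := by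
    filter_upwards [hposπ] with ω hω
    rw [hD0]; exact Real.log_mul hα.ne' hω.ne'
  have hlogD0int : Integrable (fun ω => Real.log (D0 ω)) π :=
    ((integrable_const (Real.log α)).add hKL).congr (hlogD0.mono fun ω h => h.symm)
  have hD0int : Integrable D0 ρ := hrint.const_mul α
  have hintlogD0 : ∫ ω, Real.log (D0 ω) ∂π = Real.log α + mutInfo κ μ := by
    rw [integral_congr_ae hlogD0, integral_add (integrable_const _) hKL, integral_const]
    simp [mutInfo, hπ, hρ]
  have hintD0 : ∫ ω, D0 ω ∂ρ = α := by
    rw [hD0]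
    simp only [integral_const_mul]
    rw [hr, Measure.integral_toReal_rnDeriv hac]
    simp
  have hv0 : α * ∫ ω, Real.log (D0 ω) ∂π - ∫ ω, D0 ω ∂ρ
      = α * mutInfo κ μ + (α * Real.log α - α) := by
    rw [hintlogD0, hintD0]; ring
  set S := {v : ℝ | ∃ D : X × Y → ℝ, Measurable D ∧
    (∀ᵐ ω ∂ρ, 0 < D ω) ∧ Integrable (fun ω => Real.log (D ω)) π ∧
    Integrable D ρ ∧ v = α * ∫ ω, Real.log (D ω) ∂π - ∫ ω, D ω ∂ρ} with hS
  have hmem : α * mutInfo κ μ + (α * Real.log α - α) ∈ S := by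
    exact ⟨D0, (hrmeas.const_mul α), hpos.mono fun ω h => mul_pos hα h,
      hlogD0int, hD0int, hv0.symm⟩
  have hub : ∀ v ∈ S, v ≤ α * mutInfo κ μ + (α * Real.log α - α) := by
    rintro v ⟨D, hDm, hDpos, hDlogπ, hDρ, rfl⟩
    -- change of measure for the log term
    have hchg : ∫ ω, Real.log (D ω) ∂π = ∫ ω, r ω * Real.log (D ω) ∂ρ := by
      rw [← integral_rnDeriv_smul hac]
      rfl
    have hrD : Integrable (fun ω => r ω * Real.log (D ω)) ρ :=
      (integrable_rnDeriv_smul_iff hac).mpr hDlogπ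
    have hchg0 : ∫ ω, Real.log (D0 ω) ∂π = ∫ ω, r ω * Real.log (D0 ω) ∂ρ := by
      rw [← integral_rnDeriv_smul hac]
      rfl
    have hrD0 : Integrable (fun ω => r ω * Real.log (D0 ω)) ρ :=
      (integrable_rnDeriv_smul_iff hac).mpr hlogD0int
    have key : ∫ ω, (α * (r ω * Real.log (D ω)) - D ω) ∂ρ
        ≤ ∫ ω, (α * (r ω * Real.log (D0 ω)) - D0 ω) ∂ρ := by
      refine integral_mono_ae ((hrD.const_mul α).sub hDρ) ((hrD0.const_mul α).sub hD0int) ?_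
      filter_upwards [hDpos, hpos] with ω hD hrpos
      have hc : 0 < α * r ω := mul_pos hα hrpos
      have h1 : Real.log (D ω / (α * r ω)) ≤ D ω / (α * r ω) - 1 :=
        Real.log_le_sub_one_of_pos (div_pos hD hc)
      have h2 : Real.log (D ω / (α * r ω)) = Real.log (D ω) - Real.log (α * r ω) :=
        Real.log_div hD.ne' hc.ne'
      have h3 : (α * r ω) * Real.log (D ω / (α * r ω)) ≤ D ω - α * r ω := by
        have := mul_le_mul_of_nonneg_left h1 hc.le
        calc (α * r ω) * Real.log (D ω / (α * r ω)) ≤ (α * r ω) * (D ω / (α * r ω) - 1) := this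
          _ = D ω - α * r ω := by have hr0 : r ω ≠ 0 := hrpos.ne'; field_simp
      rw [h2] at h3
      show α * (r ω * Real.log (D ω)) - D ω ≤ α * (r ω * Real.log (α * r ω)) - α * r ω
      nlinarith [h3]
    have lhs_eq : α * ∫ ω, Real.log (D ω) ∂π - ∫ ω, D ω ∂ρ
        = ∫ ω, (α * (r ω * Real.log (D ω)) - D ω) ∂ρ := by
      rw [hchg, integral_sub (hrD.const_mul α) hDρ, integral_const_mul]
    have rhs_eq : ∫ ω, (α * (r ω * Real.log (D0 ω)) - D0 ω) ∂ρ
        = α * mutInfo κ μ + (α * Real.log α - α) := by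
      rw [integral_sub (hrD0.const_mul α) hD0int, integral_const_mul, ← hchg0,
        hintlogD0, hintD0]
      ring
    rw [lhs_eq, ← rhs_eq]
    exact key
  have : corticalValue κ α μ = sSup S := rfl
  rw [this]
  exact le_antisymm (csSup_le ⟨_, hmem⟩ hub) (le_csSup ⟨_, hub⟩ hmem)

/-- For a Markov kernel (channel) `κ` and a family `M` of admissible input probability
laws (each with `π_μ = μ ⊗ κ ≪ ρ_μ = μ × (κ ∘ μ)`, `dπ_μ/dρ_μ > 0` `ρ_μ`-a.e. and
finite mutual information `I(μ) = KL(π_μ‖ρ_μ)`), and any fixed `α > 0`: an input law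
`μ* ∈ M` attains the supremum over `M` of the CORTICAL value `V_α` if and only if it
attains the supremum over `M` of the mutual information `I`; i.e., capacity-achieving
input distributions coincide with maximizers of the CORTICAL value function. -/
theorem stmt10 {X Y : Type*} [MeasurableSpace X] [MeasurableSpace Y]
    (κ : Kernel X Y) [IsMarkovKernel κ]
    (M : Set (Measure X))
    (hprob : ∀ μ ∈ M, IsProbabilityMeasure μ)
    (hac : ∀ μ ∈ M, jointLaw κ μ ≪ margLaw κ μ)
    (hpos : ∀ μ ∈ M, ∀ᵐ ω ∂(margLaw κ μ),
      0 < (((jointLaw κ μ).rnDeriv (margLaw κ μ)) ω).toReal)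
    (hKL : ∀ μ ∈ M, Integrable
      (fun ω => Real.log (((jointLaw κ μ).rnDeriv (margLaw κ μ) ω).toReal)) (jointLaw κ μ))
    (α : ℝ) (hα : 0 < α)
    (μstar : Measure X) (hμstar : μstar ∈ M) :
    (∀ μ ∈ M, corticalValue κ α μ ≤ corticalValue κ α μstar) ↔
      (∀ μ ∈ M, mutInfo κ μ ≤ mutInfo κ μstar) := by
  have key : ∀ μ ∈ M, corticalValue κ α μ = α * mutInfo κ μ + (α * Real.log α - α) :=
    fun μ hμ => corticalValue_eq κ μ (hprob μ hμ) (hac μ hμ) (hpos μ hμ) (hKL μ hμ) hα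
  constructor
  · intro h μ hμ
    have h2 := h μ hμ
    rw [key μ hμ, key μstar hμstar] at h2
    exact le_of_mul_le_mul_left (by linarith) hα
  · intro h μ hμ
    have h2 := h μ hμ
    rw [key μ hμ, key μstar hμstar]
    have := mul_le_mul_of_nonneg_left h2 hα.le
    linarith
end

section
/- Let μ and ν be probability measures on a measurable space Ω with μ absolutely continuous with respect to ν, finite KL(μ‖ν), and dμ/dν strictly positive ν-almost everywhere. For α > 0, the supremum over admissible discriminators D of α·∫ log(D) dμ − ∫ D dν, after the affine renormalization S(α) = (sup value)/α + 1 − log(α), is independent of α and equals KL(μ‖ν); i.e., for all α, β > 0, S(α) = S(β) = KL(μ‖ν). -/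
open MeasureTheory Real

lemma stmt11_aux {Ω : Type*} [MeasurableSpace Ω] (μ ν : Measure Ω)
    [IsProbabilityMeasure μ] [IsProbabilityMeasure ν]
    (hac : μ ≪ ν)
    (hKL : Integrable (fun ω => Real.log ((μ.rnDeriv ν ω).toReal)) μ)
    (hpos : ∀ᵐ ω ∂ν, 0 < (μ.rnDeriv ν ω).toReal)
    (α : ℝ) (hα : 0 < α) :
    IsGreatest {v : ℝ | ∃ D : Ω → ℝ, Measurable D ∧ (∀ᵐ ω ∂ν, 0 < D ω) ∧
        Integrable (fun ω => Real.log (D ω)) μ ∧ Integrable D ν ∧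
        v = α * ∫ ω, Real.log (D ω) ∂μ - ∫ ω, D ω ∂ν}
      (α * (Real.log α + ∫ ω, Real.log ((μ.rnDeriv ν ω).toReal) ∂μ) - α) := by
  set r : Ω → ℝ := fun ω => (μ.rnDeriv ν ω).toReal with hr
  have hposμ : ∀ᵐ ω ∂μ, 0 < r ω := hac.ae_le hpos
  have hlogαr : Integrable (fun ω => Real.log (α * r ω)) μ := by
    refine ((integrable_const (Real.log α)).add hKL).congr ?_
    filter_upwards [hposμ] with ω hω
    simp [Real.log_mul hα.ne' hω.ne']
    rfl
  have hDval : ∫ ω, α * r ω ∂ν = α := by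
    rw [integral_const_mul, Measure.integral_toReal_rnDeriv hac]
    simp
  have hintlogαr : ∫ ω, Real.log (α * r ω) ∂μ
      = Real.log α + ∫ ω, Real.log (r ω) ∂μ := by
    rw [show (fun ω => Real.log (α * r ω)) = fun ω => Real.log (α * r ω) from rfl]
    have : ∫ ω, Real.log (α * r ω) ∂μ = ∫ ω, (Real.log α + Real.log (r ω)) ∂μ := by
      refine integral_congr_ae ?_
      filter_upwards [hposμ] with ω hω
      rw [Real.log_mul hα.ne' hω.ne']
    rw [this, integral_add (integrable_const _) hKL, integral_const]
    simp
    rfl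
  constructor
  · refine ⟨fun ω => α * r ω, (Measure.measurable_rnDeriv μ ν).ennreal_toReal.const_mul α,
      ?_, hlogαr, (Measure.integrable_toReal_rnDeriv).const_mul α, ?_⟩
    · filter_upwards [hpos] with ω hω
      exact mul_pos hα hω
    · show _ = α * ∫ ω, Real.log (α * r ω) ∂μ - ∫ ω, α * r ω ∂ν
      rw [hintlogαr, hDval]
  · rintro v ⟨D, hDm, hDpos, hlogD, hDint, rfl⟩
    have hDposμ : ∀ᵐ ω ∂μ, 0 < D ω := hac.ae_le hDpos
    set g : Ω → ℝ := fun ω => D ω / (α * r ω) with hg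
    have hsmul : (fun ω => r ω • g ω) =ᵐ[ν] fun ω => D ω / α := by
      filter_upwards [hpos] with ω hω
      simp only [smul_eq_mul, hg]
      field_simp
      have hω' : r ω ≠ 0 := hω.ne'
      exact mul_div_cancel_left₀ (D ω) hω'
    have hgint : Integrable g μ :=
      (integrable_rnDeriv_smul_iff hac).mp ((hDint.div_const α).congr hsmul.symm)
    have hgval : ∫ ω, g ω ∂μ = (∫ ω, D ω ∂ν) / α := by
      rw [← integral_rnDeriv_smul hac (f := g), integral_congr_ae hsmul,
        integral_div]
    have hptwise : ∀ᵐ ω ∂μ, Real.log (D ω) - Real.log (α * r ω) ≤ g ω - 1 := by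
      filter_upwards [hposμ, hDposμ] with ω h1 h2
      have hαr : 0 < α * r ω := mul_pos hα h1
      have := Real.log_le_sub_one_of_pos (div_pos h2 hαr)
      rwa [Real.log_div h2.ne' hαr.ne'] at this
    have hmono : ∫ ω, (Real.log (D ω) - Real.log (α * r ω)) ∂μ
        ≤ ∫ ω, (g ω - 1) ∂μ :=
      integral_mono_ae (hlogD.sub hlogαr) (hgint.sub (integrable_const 1)) hptwise
    rw [integral_sub hlogD hlogαr, integral_sub hgint (integrable_const 1),
      integral_const, hgval, hintlogαr] at hmono
    simp only [measure_univ, ENNReal.toReal_one, probReal_univ, mul_one, one_smul, smul_eq_mul] at hmono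
    have h2 := mul_le_mul_of_nonneg_left hmono hα.le
    have h3 : α * ((∫ ω, D ω ∂ν) / α - 1) = (∫ ω, D ω ∂ν) - α := by
      field_simp
    nlinarith [h2, h3]

/-- Let `μ, ν` be probability measures with `μ ≪ ν`, finite KL divergence
`KL(μ‖ν) = ∫ log (dμ/dν) dμ` (finiteness expressed as integrability of `log (dμ/dν)`
with respect to `μ`), and `dμ/dν > 0` `ν`-a.e. For `α > 0`, let `S(α)` be the supremum
over admissible discriminators `D` (measurable, `ν`-a.e. strictly positive, `log ∘ D`
`μ`-integrable, `D` `ν`-integrable) of `α ∫ log D dμ - ∫ D dν`, renormalized as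
`S(α) = (sup value)/α + 1 - log α`. Then `S` is independent of `α` and equals
`KL(μ‖ν)`: for all `α, β > 0`, `S(α) = KL(μ‖ν)` and `S(β) = KL(μ‖ν)`. -/
theorem stmt11 {Ω : Type*} [MeasurableSpace Ω] (μ ν : Measure Ω)
    [IsProbabilityMeasure μ] [IsProbabilityMeasure ν]
    (hac : μ ≪ ν)
    (hKL : Integrable (fun ω => Real.log ((μ.rnDeriv ν ω).toReal)) μ)
    (hpos : ∀ᵐ ω ∂ν, 0 < (μ.rnDeriv ν ω).toReal)
    (S : ℝ → ℝ)
    (hS : ∀ α : ℝ, 0 < α → S α =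
      sSup {v : ℝ | ∃ D : Ω → ℝ, Measurable D ∧ (∀ᵐ ω ∂ν, 0 < D ω) ∧
        Integrable (fun ω => Real.log (D ω)) μ ∧ Integrable D ν ∧
        v = α * ∫ ω, Real.log (D ω) ∂μ - ∫ ω, D ω ∂ν} / α + 1 - Real.log α) :
    ∀ α β : ℝ, 0 < α → 0 < β →
      S α = ∫ ω, Real.log ((μ.rnDeriv ν ω).toReal) ∂μ ∧
      S β = ∫ ω, Real.log ((μ.rnDeriv ν ω).toReal) ∂μ := by
  have main : ∀ α : ℝ, 0 < α → S α = ∫ ω, Real.log ((μ.rnDeriv ν ω).toReal) ∂μ := by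
    intro α hα
    rw [hS α hα, (stmt11_aux μ ν hac hKL hpos α hα).csSup_eq]
    field_simp
    ring
  exact fun α β hα hβ => ⟨main α hα, main β hβ⟩
end
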